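/- Let V(A,B,q) = ∫_{x ∈ [0,1]^n, x₁^{a₁}⋯xₙ^{aₙ} > q} x₁^{b₁}⋯xₙ^{bₙ} dx for positive reals a_i, nonnegative reals b_i, and q ∈ (0,1). If the numbers c_i = (b_i+1)/a_i are pairwise distinct, then V(A,B,q) = (1/∏ a_i) · ( 1/∏ c_i − Σ_{i=1}^n q^{c_i} / (c_i · ∏_{j≠i} (c_j − c_i)) ). -/

import Mathlib

open MeasureTheory Finset
open Finset

lemma prod_erase_zero' {n : ℕ} (g : Fin (n+1) → ℝ) :
    ∏ j ∈ univ.erase 0, g j = ∏ j : Fin n, g j.succ := by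
  rw [show (univ : Finset (Fin (n+1))).erase 0 = univ.image Fin.succ by
    ext j
    simp only [mem_erase, mem_univ, and_true, mem_image, true_and]
    constructor
    · intro hj; exact ⟨j.pred hj, by simp⟩
    · rintro ⟨m, rfl⟩; exact Fin.succ_ne_zero m]
  rw [prod_image (fun x _ y _ h => Fin.succ_injective n h)]

lemma prod_erase_succ' {n : ℕ} (g : Fin (n+1) → ℝ) (k : Fin n) :
    ∏ j ∈ univ.erase k.succ, g j = g 0 * ∏ j ∈ univ.erase k, g j.succ := by
  have h0 : (0 : Fin (n+1)) ∈ univ.erase k.succ := by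
    simp [Ne.symm (Fin.succ_ne_zero k)]
  rw [← Finset.prod_erase_mul _ _ h0]
  rw [mul_comm]; congr 1
  rw [show ((univ : Finset (Fin (n+1))).erase k.succ).erase 0
      = (univ.erase k).image Fin.succ by
    ext j
    simp only [mem_erase, mem_univ, and_true, mem_image, true_and]
    constructor
    · rintro ⟨hj0, hjk⟩
      refine ⟨j.pred hj0, fun h => hjk (by simp [← h]), by simp⟩
    · rintro ⟨m, hm, rfl⟩
      exact ⟨Fin.succ_ne_zero m, fun h => hm (Fin.succ_injective n h)⟩]
  rw [prod_image (fun x _ y _ h => Fin.succ_injective n h)]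

lemma alg_step {n : ℕ} (c : Fin (n+1) → ℝ) (hc0 : ∀ i, c i ≠ 0)
    (hdist : Function.Injective c) (q : ℝ) (hq : 0 < q) :
    1 / ∏ i, c i - ∑ i, q ^ c i / (c i * ∏ j ∈ univ.erase i, (c j - c i))
    = (1 / c 0) * (
        (1 / ∏ j : Fin n, c j.succ
          - ∑ j : Fin n, q ^ c j.succ / (c j.succ * ∏ k ∈ univ.erase j, (c k.succ - c j.succ)))
        - q ^ c 0 * (1 / ∏ j : Fin n, (c j.succ - c 0)
          - ∑ j : Fin n, q ^ (c j.succ - c 0) /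
              ((c j.succ - c 0) * ∏ k ∈ univ.erase j, (c k.succ - c j.succ)))) := by
  have hc0' : c 0 ≠ 0 := hc0 0
  have hne : ∀ j : Fin n, c j.succ ≠ c 0 := fun j h =>
    Fin.succ_ne_zero j (hdist h)
  have hPi : ∀ j : Fin n, (∏ k ∈ univ.erase j, (c k.succ - c j.succ)) ≠ 0 := by
    intro j
    refine Finset.prod_ne_zero_iff.2 fun k hk => sub_ne_zero.2 fun h => ?_
    exact (Finset.mem_erase.1 hk).1 (Fin.succ_injective n (hdist h))
  have hD : (∏ j : Fin n, c j.succ) ≠ 0 := Finset.prod_ne_zero_iff.2 fun j _ => hc0 _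
  have hE : (∏ j : Fin n, (c j.succ - c 0)) ≠ 0 :=
    Finset.prod_ne_zero_iff.2 fun j _ => sub_ne_zero.2 (hne j)
  rw [Fin.sum_univ_succ, Fin.prod_univ_succ, prod_erase_zero']
  have hterm : ∀ j : Fin n,
      q ^ c j.succ / (c j.succ * ∏ k ∈ univ.erase j.succ, (c k - c j.succ))
      = (1 / c 0) * (q ^ c j.succ / (c j.succ * ∏ k ∈ univ.erase j, (c k.succ - c j.succ)))
        - (q ^ c 0 / c 0) * (q ^ (c j.succ - c 0) /
            ((c j.succ - c 0) * ∏ k ∈ univ.erase j, (c k.succ - c j.succ))) := by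
    intro j
    rw [prod_erase_succ']
    have hqq : q ^ c 0 * q ^ (c j.succ - c 0) = q ^ c j.succ := by
      rw [← Real.rpow_add hq]; ring_nf
    have h1 : c j.succ ≠ 0 := hc0 _
    have h2 : c j.succ - c 0 ≠ 0 := sub_ne_zero.2 (hne j)
    have h3 : c 0 - c j.succ ≠ 0 := sub_ne_zero.2 fun h => hne j h.symm
    have hP := hPi j
    set P := ∏ k ∈ univ.erase j, (c k.succ - c j.succ) with hPdef
    rw [← hqq]
    set u := q ^ c 0 with hu
    set v := q ^ (c j.succ - c 0) with hv
    field_simp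
    ring
  rw [Finset.sum_congr rfl (fun j _ => hterm j), Finset.sum_sub_distrib,
    ← Finset.mul_sum, ← Finset.mul_sum]
  field_simp
  ring
open MeasureTheory Finset

lemma measurable_rpow_const' (b : ℝ) : Measurable fun x : ℝ => x ^ b := by measurability

def Vset (n : ℕ) (a : Fin n → ℝ) (q : ℝ) : Set (Fin n → ℝ) :=
  {x | (∀ i, x i ∈ Set.Icc (0:ℝ) 1) ∧ q < ∏ i, x i ^ a i}

lemma Vset_factor_lt {n : ℕ} {a : Fin n → ℝ} {q : ℝ} (ha : ∀ i, 0 < a i)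
    {x : Fin n → ℝ} (hx : x ∈ Vset n a q) (i : Fin n) : q < x i ^ a i := by
  obtain ⟨hx1, hx2⟩ := hx
  refine lt_of_lt_of_le hx2 ?_
  calc ∏ j, x j ^ a j = x i ^ a i * ∏ j ∈ univ.erase i, x j ^ a j :=
        (Finset.mul_prod_erase univ _ (mem_univ i)).symm
    _ ≤ x i ^ a i * 1 := by
        refine mul_le_mul_of_nonneg_left ?_ (Real.rpow_nonneg (hx1 i).1 _)
        exact Finset.prod_le_one (fun j _ => Real.rpow_nonneg (hx1 j).1 _)
          (fun j _ => Real.rpow_le_one (hx1 j).1 (hx1 j).2 (ha j).le)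
    _ = x i ^ a i := mul_one _

lemma Vset_lower {n : ℕ} {a : Fin n → ℝ} {q : ℝ} (ha : ∀ i, 0 < a i) (hq : 0 < q)
    {x : Fin n → ℝ} (hx : x ∈ Vset n a q) (i : Fin n) : q ^ (a i)⁻¹ < x i := by
  have h := Vset_factor_lt ha hx i
  have := Real.rpow_lt_rpow hq.le h (inv_pos.2 (ha i))
  rwa [Real.rpow_rpow_inv (hx.1 i).1 (ha i).ne'] at this

lemma Vset_pos {n : ℕ} {a : Fin n → ℝ} {q : ℝ} (ha : ∀ i, 0 < a i) (hq : 0 < q)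
    {x : Fin n → ℝ} (hx : x ∈ Vset n a q) (i : Fin n) : 0 < x i :=
  lt_trans (Real.rpow_pos_of_pos hq _) (Vset_lower ha hq hx i)

lemma measurableSet_Vset (n : ℕ) (a : Fin n → ℝ) (q : ℝ) :
    MeasurableSet (Vset n a q) := by
  have h1 : MeasurableSet {x : Fin n → ℝ | ∀ i, x i ∈ Set.Icc (0:ℝ) 1} := by
    rw [show {x : Fin n → ℝ | ∀ i, x i ∈ Set.Icc (0:ℝ) 1}
        = ⋂ i, (fun x : Fin n → ℝ => x i) ⁻¹' Set.Icc (0:ℝ) 1 by ext x; simp]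
    exact MeasurableSet.iInter fun i => (measurable_pi_apply i) measurableSet_Icc
  have h2 : MeasurableSet {x : Fin n → ℝ | q < ∏ i, x i ^ a i} :=
    measurableSet_lt measurable_const
      (Finset.measurable_prod univ fun i _ => (measurable_rpow_const' _).comp (measurable_pi_apply i))
  exact h1.inter h2

lemma volume_Vset_lt_top (n : ℕ) (a : Fin n → ℝ) (q : ℝ) :
    volume (Vset n a q) < ⊤ := by
  have hsub : Vset n a q ⊆ Set.pi Set.univ (fun _ : Fin n => Set.Icc (0:ℝ) 1) := by
    intro x hx
    rw [Set.mem_univ_pi]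
    exact hx.1
  refine lt_of_le_of_lt (measure_mono hsub) ?_
  rw [volume_pi_pi]
  simp [Real.volume_Icc]

lemma integrableOn_Vset {n : ℕ} {a : Fin n → ℝ} {q : ℝ} (ha : ∀ i, 0 < a i)
    (hq : 0 < q) (b : Fin n → ℝ) :
    IntegrableOn (fun x : Fin n → ℝ => ∏ i, x i ^ b i) (Vset n a q) := by
  refine Measure.integrableOn_of_bounded (volume_Vset_lt_top n a q).ne
    ((Finset.measurable_prod univ fun i _ =>
      (measurable_rpow_const' _).comp (measurable_pi_apply i)).aestronglyMeasurable)
    (M := ∏ i, max 1 ((q ^ (a i)⁻¹) ^ b i)) ?_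
  refine (ae_restrict_mem (measurableSet_Vset n a q)).mono fun x hx => ?_
  have hxpos : ∀ i, 0 < x i := Vset_pos ha hq hx
  rw [Real.norm_eq_abs, abs_of_nonneg (Finset.prod_nonneg fun i _ =>
    Real.rpow_nonneg (hxpos i).le _)]
  refine Finset.prod_le_prod (fun i _ => Real.rpow_nonneg (hxpos i).le _) fun i _ => ?_
  rcases le_or_gt 0 (b i) with hbi | hbi
  · exact le_max_of_le_left (Real.rpow_le_one (hxpos i).le (hx.1 i).2 hbi)
  · refine le_max_of_le_right ?_
    exact Real.rpow_le_rpow_of_nonpos (Real.rpow_pos_of_pos hq _)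
      (Vset_lower ha hq hx i).le hbi.le

theorem gen : ∀ (n : ℕ) (a b c : Fin n → ℝ), (∀ i, 0 < a i) →
    (∀ i, c i = (b i + 1) / a i) → (∀ i, c i ≠ 0) → Function.Injective c →
    ∀ q : ℝ, q ∈ Set.Ioo (0:ℝ) 1 →
    ∫ x in Vset n a q, ∏ i, x i ^ b i
      = (1 / ∏ i, a i) *
        (1 / ∏ i, c i - ∑ i, q ^ c i / (c i * ∏ j ∈ univ.erase i, (c j - c i))) := by
  intro n
  induction n with
  | zero =>
    intro a b c ha hc hc0 hdist q hq
    have hS : Vset 0 a q = Set.univ := by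
      ext x
      simp [Vset, hq.2]
    have huniv : (volume (Set.univ : Set (Fin 0 → ℝ))) = 1 := by
      rw [show (Set.univ : Set (Fin 0 → ℝ)) = Set.pi Set.univ (fun _ => Set.Icc 0 1) by
        ext x; simp [Set.mem_univ_pi]]
      rw [volume_pi_pi]
      simp
    rw [hS, Measure.restrict_univ]
    simp [huniv, measureReal_def]
  | succ n IH =>
    intro a b c ha hc hc0 hdist q hq
    classical
    obtain ⟨hq0, hq1⟩ := hq
    have ha0 := ha 0
    have hc00 : c 0 ≠ 0 := hc0 0
    have hb0 : b 0 + 1 = a 0 * c 0 := by rw [hc 0]; field_simp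
    have hb0ne : b 0 ≠ -1 := by
      intro h
      rw [h] at hb0
      exact (mul_ne_zero ha0.ne' hc00) (by linarith)
    have ha' : ∀ j : Fin n, 0 < a j.succ := fun j => ha j.succ
    have hmp : MeasurePreserving
        ((MeasurableEquiv.piFinSuccAbove (fun _ : Fin (n+1) => ℝ) 0).symm) volume volume :=
      (volume_preserving_piFinSuccAbove (fun _ : Fin (n + 1) => ℝ) 0).symm _
    have hint : IntegrableOn (fun x : Fin (n+1) → ℝ => ∏ i, x i ^ b i) (Vset (n+1) a q) :=
      integrableOn_Vset ha hq0 b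
    rw [← integral_indicator (measurableSet_Vset _ _ _),
      ← hmp.integral_comp (MeasurableEquiv.measurableEmbedding _)]
    have hF : ∀ p : ℝ × (Fin n → ℝ),
        Set.indicator (Vset (n+1) a q) (fun x => ∏ i, x i ^ b i)
          ((MeasurableEquiv.piFinSuccAbove (fun _ : Fin (n+1) => ℝ) 0).symm p)
        = if ((p.1 ∈ Set.Icc (0:ℝ) 1 ∧ ∀ j, p.2 j ∈ Set.Icc (0:ℝ) 1)
              ∧ q < p.1 ^ a 0 * ∏ j, p.2 j ^ a j.succ)
          then p.1 ^ b 0 * ∏ j, p.2 j ^ b j.succ else 0 := by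
      rintro ⟨t, y⟩
      have hcons : (MeasurableEquiv.piFinSuccAbove (fun _ : Fin (n+1) => ℝ) 0).symm (t, y)
          = Fin.cons t y := by
        simp [MeasurableEquiv.piFinSuccAbove_symm_apply, Fin.insertNthEquiv]
      rw [hcons, Set.indicator_apply]
      have hmem : (Fin.cons t y ∈ Vset (n+1) a q) ↔
          ((t ∈ Set.Icc (0:ℝ) 1 ∧ ∀ j, y j ∈ Set.Icc (0:ℝ) 1)
            ∧ q < t ^ a 0 * ∏ j, y j ^ a j.succ) := by
        simp [Vset, Fin.forall_fin_succ, Fin.prod_univ_succ]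
      simp only [hmem, Fin.prod_univ_succ, Fin.cons_zero, Fin.cons_succ]
    have hFint : Integrable (fun p : ℝ × (Fin n → ℝ) =>
        if ((p.1 ∈ Set.Icc (0:ℝ) 1 ∧ ∀ j, p.2 j ∈ Set.Icc (0:ℝ) 1)
            ∧ q < p.1 ^ a 0 * ∏ j, p.2 j ^ a j.succ)
        then p.1 ^ b 0 * ∏ j, p.2 j ^ b j.succ else 0) := by
      have h1 := (integrable_indicator_iff (measurableSet_Vset (n+1) a q)).2 hint
      have h2 := (hmp.integrable_comp_emb (MeasurableEquiv.measurableEmbedding _)).2 h1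
      exact h2.congr (Filter.Eventually.of_forall hF)
    simp_rw [hF]
    rw [Measure.volume_eq_prod] at hFint ⊢
    rw [integral_prod_symm _ hFint]
    have hinner : ∀ y : Fin n → ℝ,
        (∫ t : ℝ, if ((t ∈ Set.Icc (0:ℝ) 1 ∧ ∀ j, y j ∈ Set.Icc (0:ℝ) 1)
              ∧ q < t ^ a 0 * ∏ j, y j ^ a j.succ)
            then t ^ b 0 * ∏ j, y j ^ b j.succ else 0)
        = (a 0 * c 0)⁻¹ *
            (Set.indicator (Vset n (fun j => a j.succ) q) (fun y => ∏ j, y j ^ b j.succ) y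
             - q ^ c 0 * Set.indicator (Vset n (fun j => a j.succ) q)
                 (fun y => ∏ j, y j ^ (b j.succ - a j.succ * c 0)) y) := by
      intro y
      by_cases hy : y ∈ Vset n (fun j => a j.succ) q
      · have hy' := hy
        obtain ⟨hyc, hyP⟩ := hy
        have hypos : ∀ j, 0 < y j := Vset_pos ha' hq0 hy'
        have hP0 : 0 < ∏ j, y j ^ a j.succ := lt_trans hq0 hyP
        have hqP0 : 0 < q / ∏ j, y j ^ a j.succ := div_pos hq0 hP0
        have hqP1 : q / ∏ j, y j ^ a j.succ < 1 := (div_lt_one hP0).2 hyP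
        have hr0 : 0 < (q / ∏ j, y j ^ a j.succ) ^ (a 0)⁻¹ :=
          Real.rpow_pos_of_pos hqP0 _
        have hr1 : (q / ∏ j, y j ^ a j.succ) ^ (a 0)⁻¹ < 1 :=
          Real.rpow_lt_one hqP0.le hqP1 (inv_pos.2 ha0)
        have hset : ∀ t : ℝ,
            (if ((t ∈ Set.Icc (0:ℝ) 1 ∧ ∀ j, y j ∈ Set.Icc (0:ℝ) 1)
                ∧ q < t ^ a 0 * ∏ j, y j ^ a j.succ)
              then t ^ b 0 * ∏ j, y j ^ b j.succ else 0)
            = Set.indicator (Set.Ioc ((q / ∏ j, y j ^ a j.succ) ^ (a 0)⁻¹) 1)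
                (fun t => t ^ b 0) t * ∏ j, y j ^ b j.succ := by
          intro t
          rw [Set.indicator_apply, ite_mul, zero_mul]
          refine if_congr ?_ rfl rfl
          constructor
          · rintro ⟨⟨⟨ht0, ht1⟩, -⟩, hlt⟩
            have h2 : q / ∏ j, y j ^ a j.succ < t ^ a 0 := (div_lt_iff₀ hP0).2 hlt
            have h3 := Real.rpow_lt_rpow hqP0.le h2 (inv_pos.2 ha0)
            rw [Real.rpow_rpow_inv ht0 ha0.ne'] at h3
            exact ⟨h3, ht1⟩
          · rintro ⟨htr, ht1⟩
            have ht0 : 0 ≤ t := (hr0.trans htr).le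
            refine ⟨⟨⟨ht0, ht1⟩, hyc⟩, ?_⟩
            have h3 := Real.rpow_lt_rpow hr0.le htr ha0
            rw [Real.rpow_inv_rpow hqP0.le ha0.ne'] at h3
            exact (div_lt_iff₀ hP0).1 h3
        simp_rw [hset]
        rw [integral_mul_const, integral_indicator measurableSet_Ioc,
          ← intervalIntegral.integral_of_le hr1.le,
          integral_rpow (Or.inr ⟨hb0ne, by
            intro hmem
            rw [Set.uIcc_of_le hr1.le, Set.mem_Icc] at hmem
            linarith [hr0, hmem.1]⟩)]
        rw [Real.one_rpow]
        have hkey : ((q / ∏ j, y j ^ a j.succ) ^ (a 0)⁻¹) ^ (b 0 + 1) * ∏ j, y j ^ b j.succ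
            = q ^ c 0 * ∏ j, y j ^ (b j.succ - a j.succ * c 0) := by
          have e1 : ((q / ∏ j, y j ^ a j.succ) ^ (a 0)⁻¹) ^ (b 0 + 1)
              = (q / ∏ j, y j ^ a j.succ) ^ (c 0) := by
            rw [← Real.rpow_mul hqP0.le]
            congr 1
            rw [hb0]
            field_simp
          have e2 : (∏ j, y j ^ a j.succ) ^ (c 0) = ∏ j, y j ^ (a j.succ * c 0) := by
            rw [← Real.finset_prod_rpow _ _ (fun j _ => Real.rpow_nonneg (hypos j).le _) (c 0)]
            exact Finset.prod_congr rfl fun j _ => (Real.rpow_mul (hypos j).le _ _).symm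
          have e3 : ∏ j, y j ^ (b j.succ - a j.succ * c 0)
              = (∏ j, y j ^ b j.succ) / (∏ j, y j ^ a j.succ) ^ c 0 := by
            rw [e2, ← Finset.prod_div_distrib]
            exact Finset.prod_congr rfl fun j _ => Real.rpow_sub (hypos j) _ _
          have hPc : (∏ j, y j ^ a j.succ) ^ c 0 ≠ 0 :=
            ne_of_gt (Real.rpow_pos_of_pos hP0 _)
          rw [e1, e3, Real.div_rpow hq0.le (Finset.prod_nonneg fun j _ =>
            Real.rpow_nonneg (hypos j).le _)]
          field_simp
        rw [Set.indicator_of_mem hy', Set.indicator_of_mem hy']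
        rw [div_mul_eq_mul_div, sub_mul, hkey, hb0]
        ring
      · have hzero : ∀ t : ℝ,
            (if ((t ∈ Set.Icc (0:ℝ) 1 ∧ ∀ j, y j ∈ Set.Icc (0:ℝ) 1)
                ∧ q < t ^ a 0 * ∏ j, y j ^ a j.succ)
              then t ^ b 0 * ∏ j, y j ^ b j.succ else 0) = 0 := by
          intro t
          rw [if_neg]
          rintro ⟨⟨⟨ht0, ht1⟩, hyc⟩, hlt⟩
          refine hy ⟨hyc, lt_of_lt_of_le hlt ?_⟩
          calc t ^ a 0 * ∏ j, y j ^ a j.succ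
              ≤ 1 * ∏ j, y j ^ a j.succ := by
                refine mul_le_mul_of_nonneg_right (Real.rpow_le_one ht0 ht1 ha0.le) ?_
                exact Finset.prod_nonneg fun j _ => Real.rpow_nonneg (hyc j).1 _
            _ = ∏ j, y j ^ a j.succ := one_mul _
        simp_rw [hzero]
        rw [integral_zero, Set.indicator_of_notMem hy, Set.indicator_of_notMem hy]
        ring
    rw [integral_congr_ae (Filter.Eventually.of_forall hinner)]
    have hint1 : Integrable (Set.indicator (Vset n (fun j => a j.succ) q)
        (fun y : Fin n → ℝ => ∏ j, y j ^ b j.succ)) :=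
      (integrable_indicator_iff (measurableSet_Vset _ _ _)).2 (integrableOn_Vset ha' hq0 _)
    have hint2 : Integrable (Set.indicator (Vset n (fun j => a j.succ) q)
        (fun y : Fin n → ℝ => ∏ j, y j ^ (b j.succ - a j.succ * c 0))) :=
      (integrable_indicator_iff (measurableSet_Vset _ _ _)).2 (integrableOn_Vset ha' hq0 _)
    rw [integral_const_mul, integral_sub hint1 (hint2.const_mul _), integral_const_mul,
      integral_indicator (measurableSet_Vset _ _ _), integral_indicator (measurableSet_Vset _ _ _)]
    have hinj' : Function.Injective (fun j : Fin n => c j.succ) :=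
      fun u v h => Fin.succ_injective n (hdist h)
    have hinj'' : Function.Injective (fun j : Fin n => c j.succ - c 0) := by
      intro u v h
      exact hinj' (by simpa [sub_left_inj] using h)
    rw [IH (fun j => a j.succ) (fun j => b j.succ) (fun j => c j.succ) ha'
        (fun j => hc j.succ) (fun j => hc0 j.succ) hinj' q ⟨hq0, hq1⟩,
      IH (fun j => a j.succ) (fun j => b j.succ - a j.succ * c 0) (fun j => c j.succ - c 0) ha'
        (fun j => by
          show c j.succ - c 0 = (b j.succ - a j.succ * c 0 + 1) / a j.succ
          rw [hc j.succ]; field_simp [(ha' j).ne']; ring)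
        (fun j => sub_ne_zero.2 fun h => Fin.succ_ne_zero j (hdist h)) hinj'' q ⟨hq0, hq1⟩]
    simp only [sub_sub_sub_cancel_right]
    rw [alg_step c hc0 hdist q hq0, Fin.prod_univ_succ]
    have hA : (∏ j : Fin n, a j.succ) ≠ 0 :=
      Finset.prod_ne_zero_iff.2 fun j _ => (ha' j).ne'
    generalize (1 / ∏ j : Fin n, c j.succ - ∑ j : Fin n, q ^ c j.succ /
      (c j.succ * ∏ k ∈ univ.erase j, (c k.succ - c j.succ))) = X
    generalize (1 / ∏ j : Fin n, (c j.succ - c 0) - ∑ j : Fin n, q ^ (c j.succ - c 0) /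
      ((c j.succ - c 0) * ∏ k ∈ univ.erase j, (c k.succ - c j.succ))) = Y
    ring

/-- Lemma `VolumeComputation`, case (2): explicit formula for
`V(A,B,q) = ∫_{x ∈ [0,1]^n, x^A > q} x^B dx` when the `c i = (b i + 1)/(a i)`
are pairwise distinct. -/
theorem stmt0 (n : ℕ) (a b c : Fin n → ℝ)
    (ha : ∀ i, 0 < a i) (hb : ∀ i, 0 ≤ b i)
    (hc : ∀ i, c i = (b i + 1) / a i)
    (hdist : Function.Injective c)
    (q : ℝ) (hq : q ∈ Set.Ioo (0 : ℝ) 1) :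
    ∫ x in {x : Fin n → ℝ | (∀ i, x i ∈ Set.Icc (0:ℝ) 1) ∧ q < ∏ i, x i ^ a i},
      ∏ i, x i ^ b i
    = (1 / ∏ i, a i) *
      (1 / ∏ i, c i -
        ∑ i, q ^ c i / (c i * ∏ j ∈ univ.erase i, (c j - c i))) := by
  have hc0 : ∀ i, c i ≠ 0 := fun i => by
    rw [hc i]
    exact ne_of_gt (div_pos (by linarith [hb i]) (ha i))
  exact gen n a b c ha hc hc0 hdist q hq
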